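/- Let A and B be m×n complex matrices and E = B − A. Define β′₁ := (‖E‖_F² − ‖EB†B‖_F²)/‖A‖₂⁴ + (‖E‖_F² − ‖AA†E‖_F²)/‖B‖₂⁴ and β′₂ := (‖E‖_F² − ‖BB†E‖_F²)/‖A‖₂⁴ + (‖E‖_F² − ‖EA†A‖_F²)/‖B‖₂⁴. Then ‖B† − A†‖_F² ≥ max{β′₁ + ‖B†EA†‖_F², β′₂ + ‖A†EB†‖_F²}. -/

import Mathlib

open Matrix

/-- The square of the Frobenius norm of a complex matrix. -/
noncomputable def frobSq {α β : Type*} [Fintype α] [Fintype β] (M : Matrix α β ℂ) : ℝ :=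
  ∑ i, ∑ j, ‖M i j‖ ^ 2

/-- The spectral norm (ℓ²-operator norm) of a complex matrix. -/
noncomputable def spec {α β : Type*} [Fintype α] [Fintype β] [DecidableEq β]
    (M : Matrix α β ℂ) : ℝ :=
  ‖LinearMap.toContinuousLinearMap (Matrix.toEuclideanLin M)‖

/-- `X` is the Moore–Penrose inverse of `M` (the four Penrose equations). -/
def IsMoorePenrose {α β : Type*} [Fintype α] [Fintype β]
    (M : Matrix α β ℂ) (X : Matrix β α ℂ) : Prop :=
  M * X * M = M ∧ X * M * X = X ∧ (M * X)ᴴ = M * X ∧ (X * M)ᴴ = X * M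


section frob
variable {α β γ : Type*} [Fintype α] [Fintype β] [Fintype γ]

lemma frobSq_nonneg (M : Matrix α β ℂ) : 0 ≤ frobSq M := by
  apply Finset.sum_nonneg; intro i _; apply Finset.sum_nonneg; intro j _; positivity

lemma frobSq_eq_trace (M : Matrix α β ℂ) : frobSq M = (Matrix.trace (Mᴴ * M)).re := by
  rw [Matrix.trace]
  simp only [Matrix.diag_apply, Matrix.mul_apply, Matrix.conjTranspose_apply]
  rw [Complex.re_sum]
  rw [frobSq, Finset.sum_comm]
  congr 1; ext j
  rw [Complex.re_sum]
  congr 1; ext i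
  rw [show (star (M i j)) = (starRingEnd ℂ) (M i j) from rfl, mul_comm, Complex.mul_conj]
  rw [Complex.ofReal_re, ← Complex.sq_norm]

lemma frobSq_neg (M : Matrix α β ℂ) : frobSq (-M) = frobSq M := by
  simp [frobSq]

lemma frobSq_conjTranspose (M : Matrix α β ℂ) : frobSq Mᴴ = frobSq M := by
  rw [frobSq, Finset.sum_comm, frobSq]
  simp [Matrix.conjTranspose_apply]

lemma pyth (X Y : Matrix α β ℂ) (h : Matrix.trace (Xᴴ * Y) = 0) :
    frobSq (X + Y) = frobSq X + frobSq Y := by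
  have h' : Matrix.trace (Yᴴ * X) = 0 := by
    have e : Yᴴ * X = (Xᴴ * Y)ᴴ := by simp [Matrix.conjTranspose_mul]
    rw [e, Matrix.trace_conjTranspose, h, star_zero]
  rw [frobSq_eq_trace, frobSq_eq_trace, frobSq_eq_trace]
  rw [Matrix.conjTranspose_add, Matrix.add_mul, Matrix.mul_add, Matrix.mul_add]
  rw [Matrix.trace_add, Matrix.trace_add, Matrix.trace_add, h, h']
  simp

end frob

section specstuff
open scoped Matrix.Norms.L2Operator
variable {α β γ : Type*} [Fintype α] [Fintype β] [Fintype γ] [DecidableEq β]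

lemma spec_eq (M : Matrix α β ℂ) : spec M = ‖M‖ := rfl

lemma spec_pos (M : Matrix α β ℂ) (h : M ≠ 0) : 0 < spec M := by
  rw [spec_eq]; exact norm_pos_iff.mpr h

lemma spec_conjTranspose [DecidableEq α] (M : Matrix α β ℂ) : spec Mᴴ = spec M := by
  rw [spec_eq, spec_eq]; exact Matrix.l2_opNorm_conjTranspose M

lemma euclid_norm_sq (w : α → ℂ) :
    ‖(EuclideanSpace.equiv α ℂ).symm w‖ ^ 2 = ∑ i, ‖w i‖ ^ 2 := by
  rw [EuclideanSpace.norm_eq]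
  rw [Real.sq_sqrt (Finset.sum_nonneg fun i _ => sq_nonneg _)]
  rfl

lemma frobSq_mul_le (M : Matrix α β ℂ) (X : Matrix β γ ℂ) :
    frobSq (M * X) ≤ spec M ^ 2 * frobSq X := by
  have key : ∀ j, ∑ i, ‖(M * X) i j‖ ^ 2 ≤ spec M ^ 2 * ∑ k, ‖X k j‖ ^ 2 := by
    intro j
    have h1 := Matrix.l2_opNorm_mulVec M ((EuclideanSpace.equiv β ℂ).symm (fun k => X k j))
    have h2 : ‖(EuclideanSpace.equiv α ℂ).symm (M *ᵥ fun k => X k j)‖ ^ 2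
        ≤ (‖M‖ * ‖(EuclideanSpace.equiv β ℂ).symm (fun k => X k j)‖) ^ 2 := by
      apply pow_le_pow_left₀ (norm_nonneg _) h1
    rw [euclid_norm_sq, mul_pow, euclid_norm_sq] at h2
    have h3 : ∀ i, (M * X) i j = (M *ᵥ fun k => X k j) i := by
      intro i; simp [Matrix.mul_apply, Matrix.mulVec, dotProduct]
    rw [spec_eq]
    calc ∑ i, ‖(M * X) i j‖ ^ 2 = ∑ i, ‖(M *ᵥ fun k => X k j) i‖ ^ 2 := by
          simp only [h3]
      _ ≤ ‖M‖ ^ 2 * ∑ k, ‖X k j‖ ^ 2 := h2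
  calc frobSq (M * X) = ∑ j, ∑ i, ‖(M * X) i j‖ ^ 2 := by rw [frobSq]; exact Finset.sum_comm
    _ ≤ ∑ j, spec M ^ 2 * ∑ k, ‖X k j‖ ^ 2 := Finset.sum_le_sum fun j _ => key j
    _ = spec M ^ 2 * frobSq X := by rw [← Finset.mul_sum, frobSq]; rw [Finset.sum_comm]
end specstuff

set_option linter.unusedSectionVars false
section mpfacts
variable {a b : Type*} [Fintype a] [Fintype b]

-- assoc helpers
lemma masc2 {c d p : Type*} [Fintype c] [Fintype d]
    (P : Matrix a c ℂ) (Q : Matrix c b ℂ) (R : Matrix a d ℂ) (S : Matrix d b ℂ)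
    (h : P * Q = R * S) (X : Matrix b p ℂ) : P * (Q * X) = R * (S * X) := by
  rw [← Matrix.mul_assoc, h, Matrix.mul_assoc]

lemma masc3 {c d p : Type*} [Fintype c] [Fintype d]
    (P : Matrix a c ℂ) (Q : Matrix c d ℂ) (S : Matrix d b ℂ) (R : Matrix a b ℂ)
    (h : P * Q * S = R) (X : Matrix b p ℂ) : P * (Q * (S * X)) = R * X := by
  rw [← Matrix.mul_assoc, ← Matrix.mul_assoc, h]

variable (M : Matrix a b ℂ) (X : Matrix b a ℂ)

lemma mp_r1 (h : IsMoorePenrose M X) : M * (X * M) = M := by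
  rw [← Matrix.mul_assoc]; exact h.1
lemma mp_r2 (h : IsMoorePenrose M X) : X * (M * X) = X := by
  rw [← Matrix.mul_assoc]; exact h.2.1
lemma mp_r3 (h : IsMoorePenrose M X) : Mᴴ * (M * X) = Mᴴ := by
  rw [← h.2.2.1, ← Matrix.conjTranspose_mul, h.1]
lemma mp_r6 (h : IsMoorePenrose M X) : Mᴴ * Xᴴ = X * M := by
  rw [← Matrix.conjTranspose_mul]; exact h.2.2.2
lemma mp_r7 (h : IsMoorePenrose M X) : Xᴴ * Mᴴ = M * X := by
  rw [← Matrix.conjTranspose_mul]; exact h.2.2.1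
lemma mp_r8 (h : IsMoorePenrose M X) : M * (X * Xᴴ) = Xᴴ := by
  rw [← Matrix.mul_assoc, ← h.2.2.1, ← Matrix.conjTranspose_mul, ← Matrix.mul_assoc, h.2.1]
lemma mp_r9 (h : IsMoorePenrose M X) : X * (M * Mᴴ) = Mᴴ := by
  rw [← Matrix.mul_assoc, ← h.2.2.2, ← Matrix.conjTranspose_mul, ← Matrix.mul_assoc, h.1]
lemma mp_r10 (h : IsMoorePenrose M X) : Xᴴ * (X * M) = Xᴴ := by
  rw [← h.2.2.2, ← Matrix.conjTranspose_mul, h.2.1]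
lemma mp_f10 (h : IsMoorePenrose M X) : Xᴴ * X * M = Xᴴ := by
  rw [Matrix.mul_assoc]; exact mp_r10 M X h
lemma mp_f3 (h : IsMoorePenrose M X) : Mᴴ * M * X = Mᴴ := by
  rw [Matrix.mul_assoc]; exact mp_r3 M X h
lemma mp_f8 (h : IsMoorePenrose M X) : M * X * Xᴴ = Xᴴ := by
  rw [Matrix.mul_assoc]; exact mp_r8 M X h
lemma mp_f9 (h : IsMoorePenrose M X) : X * M * Mᴴ = Mᴴ := by
  rw [Matrix.mul_assoc]; exact mp_r9 M X h

-- applied (∀-quantified) forms, for simp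
lemma mp_a1 (h : IsMoorePenrose M X) {p : Type*} (Y : Matrix b p ℂ) :
    M * (X * (M * Y)) = M * Y := masc3 _ _ _ _ h.1 Y
lemma mp_a2 (h : IsMoorePenrose M X) {p : Type*} (Y : Matrix a p ℂ) :
    X * (M * (X * Y)) = X * Y := masc3 _ _ _ _ h.2.1 Y
lemma mp_a3 (h : IsMoorePenrose M X) {p : Type*} (Y : Matrix a p ℂ) :
    Mᴴ * (M * (X * Y)) = Mᴴ * Y := masc3 _ _ _ _ (mp_f3 M X h) Y
lemma mp_a6 (h : IsMoorePenrose M X) {p : Type*} (Y : Matrix b p ℂ) :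
    Mᴴ * (Xᴴ * Y) = X * (M * Y) := masc2 _ _ _ _ (mp_r6 M X h) Y
lemma mp_a7 (h : IsMoorePenrose M X) {p : Type*} (Y : Matrix a p ℂ) :
    Xᴴ * (Mᴴ * Y) = M * (X * Y) := masc2 _ _ _ _ (mp_r7 M X h) Y
lemma mp_a8 (h : IsMoorePenrose M X) {p : Type*} (Y : Matrix b p ℂ) :
    M * (X * (Xᴴ * Y)) = Xᴴ * Y := masc3 _ _ _ _ (mp_f8 M X h) Y
lemma mp_a10 (h : IsMoorePenrose M X) {p : Type*} (Y : Matrix b p ℂ) :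
    Xᴴ * (X * (M * Y)) = Xᴴ * Y := masc3 _ _ _ _ (mp_f10 M X h) Y
lemma mp_a9 (h : IsMoorePenrose M X) {p : Type*} (Y : Matrix a p ℂ) :
    X * (M * (Mᴴ * Y)) = Mᴴ * Y := masc3 _ _ _ _ (mp_f9 M X h) Y
end mpfacts

theorem key {m n : ℕ}
    (A B : Matrix (Fin m) (Fin n) ℂ) (Adag Bdag : Matrix (Fin n) (Fin m) ℂ)
    (hA : IsMoorePenrose A Adag) (hB : IsMoorePenrose B Bdag)
    (hA0 : A ≠ 0) (hB0 : B ≠ 0) :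
    (frobSq (B - A) - frobSq ((B - A) * Bdag * B)) / spec A ^ 4
      + (frobSq (B - A) - frobSq (A * Adag * (B - A))) / spec B ^ 4
      + frobSq (Bdag * (B - A) * Adag) ≤ frobSq (Bdag - Adag) := by
  obtain ⟨hA1, hA2, hA3, hA4⟩ := hA
  obtain ⟨hB1, hB2, hB3, hB4⟩ := hB
  -- the three pieces of the decomposition
  set T1 : Matrix (Fin n) (Fin m) ℂ := -(Bdag * ((B - A) * Adag)) with hT1def
  set T2 : Matrix (Fin n) (Fin m) ℂ :=
    Bdag * (Bdagᴴ * ((Bᴴ - Aᴴ) * (1 - A * Adag))) with hT2def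
  set T3 : Matrix (Fin n) (Fin m) ℂ :=
    (1 - Bdag * B) * ((Bᴴ - Aᴴ) * (Adagᴴ * Adag)) with hT3def
  have hAmp : IsMoorePenrose A Adag := ⟨hA1, hA2, hA3, hA4⟩
  have hBmp : IsMoorePenrose B Bdag := ⟨hB1, hB2, hB3, hB4⟩
  -- decomposition
  have decomp : Bdag - Adag = T1 + (T2 + T3) := by
    rw [hT1def, hT2def, hT3def]
    simp only [Matrix.mul_sub, Matrix.sub_mul, Matrix.mul_one, Matrix.one_mul,
      Matrix.mul_assoc, mp_r1 A Adag hAmp, mp_r2 A Adag hAmp, mp_r3 A Adag hAmp,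
      mp_r6 A Adag hAmp, mp_r7 A Adag hAmp, mp_r8 A Adag hAmp, mp_r9 A Adag hAmp,
      mp_r10 A Adag hAmp,
      mp_a1 A Adag hAmp, mp_a2 A Adag hAmp, mp_a3 A Adag hAmp, mp_a6 A Adag hAmp,
      mp_a7 A Adag hAmp, mp_a8 A Adag hAmp, mp_a9 A Adag hAmp, mp_a10 A Adag hAmp,
      mp_r1 B Bdag hBmp, mp_r2 B Bdag hBmp, mp_r3 B Bdag hBmp,
      mp_r6 B Bdag hBmp, mp_r7 B Bdag hBmp, mp_r8 B Bdag hBmp, mp_r9 B Bdag hBmp,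
      mp_r10 B Bdag hBmp,
      mp_a1 B Bdag hBmp, mp_a2 B Bdag hBmp, mp_a3 B Bdag hBmp, mp_a6 B Bdag hBmp,
      mp_a7 B Bdag hBmp, mp_a8 B Bdag hBmp, mp_a9 B Bdag hBmp, mp_a10 B Bdag hBmp]
    abel

  -- orthogonality: T1 perp T3 (zero matrix)
  have z13 : T1ᴴ * T3 = 0 := by
    rw [hT1def, hT3def]
    simp only [Matrix.conjTranspose_neg, Matrix.conjTranspose_mul, Matrix.conjTranspose_sub,
      Matrix.conjTranspose_one, Matrix.conjTranspose_conjTranspose,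
      Matrix.neg_mul, Matrix.mul_neg, Matrix.mul_sub, Matrix.sub_mul,
      Matrix.mul_one, Matrix.one_mul, Matrix.mul_assoc,
      mp_r1 A Adag hAmp, mp_r2 A Adag hAmp, mp_r3 A Adag hAmp,
      mp_r6 A Adag hAmp, mp_r7 A Adag hAmp, mp_r8 A Adag hAmp, mp_r9 A Adag hAmp,
      mp_r10 A Adag hAmp,
      mp_a1 A Adag hAmp, mp_a2 A Adag hAmp, mp_a3 A Adag hAmp, mp_a6 A Adag hAmp,
      mp_a7 A Adag hAmp, mp_a8 A Adag hAmp, mp_a9 A Adag hAmp, mp_a10 A Adag hAmp,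
      mp_r1 B Bdag hBmp, mp_r2 B Bdag hBmp, mp_r3 B Bdag hBmp,
      mp_r6 B Bdag hBmp, mp_r7 B Bdag hBmp, mp_r8 B Bdag hBmp, mp_r9 B Bdag hBmp,
      mp_r10 B Bdag hBmp,
      mp_a1 B Bdag hBmp, mp_a2 B Bdag hBmp, mp_a3 B Bdag hBmp, mp_a6 B Bdag hBmp,
      mp_a7 B Bdag hBmp, mp_a8 B Bdag hBmp, mp_a9 B Bdag hBmp, mp_a10 B Bdag hBmp]
    abel
  -- orthogonality: T2 perp T3 (zero matrix)
  have z23 : T2ᴴ * T3 = 0 := by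
    rw [hT2def, hT3def]
    simp only [Matrix.conjTranspose_neg, Matrix.conjTranspose_mul, Matrix.conjTranspose_sub,
      Matrix.conjTranspose_one, Matrix.conjTranspose_conjTranspose,
      Matrix.neg_mul, Matrix.mul_neg, Matrix.mul_sub, Matrix.sub_mul,
      Matrix.mul_one, Matrix.one_mul, Matrix.mul_assoc,
      mp_r1 A Adag hAmp, mp_r2 A Adag hAmp, mp_r3 A Adag hAmp,
      mp_r6 A Adag hAmp, mp_r7 A Adag hAmp, mp_r8 A Adag hAmp, mp_r9 A Adag hAmp,
      mp_r10 A Adag hAmp,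
      mp_a1 A Adag hAmp, mp_a2 A Adag hAmp, mp_a3 A Adag hAmp, mp_a6 A Adag hAmp,
      mp_a7 A Adag hAmp, mp_a8 A Adag hAmp, mp_a9 A Adag hAmp, mp_a10 A Adag hAmp,
      mp_r1 B Bdag hBmp, mp_r2 B Bdag hBmp, mp_r3 B Bdag hBmp,
      mp_r6 B Bdag hBmp, mp_r7 B Bdag hBmp, mp_r8 B Bdag hBmp, mp_r9 B Bdag hBmp,
      mp_r10 B Bdag hBmp,
      mp_a1 B Bdag hBmp, mp_a2 B Bdag hBmp, mp_a3 B Bdag hBmp, mp_a6 B Bdag hBmp,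
      mp_a7 B Bdag hBmp, mp_a8 B Bdag hBmp, mp_a9 B Bdag hBmp, mp_a10 B Bdag hBmp]
    abel
  -- T1 perp T2 (trace zero via cyclicity)
  have tr12 : Matrix.trace (T1ᴴ * T2) = 0 := by
    have assoc12 : T1ᴴ * T2
        = (-(Adagᴴ * ((Bᴴ - Aᴴ) * (Bdagᴴ * (Bdag * (Bdagᴴ * (Bᴴ - Aᴴ))))))) * (1 - A * Adag) := by
      rw [hT1def, hT2def]
      simp only [Matrix.conjTranspose_neg, Matrix.conjTranspose_mul, Matrix.conjTranspose_sub,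
        Matrix.neg_mul, Matrix.mul_assoc]
    have aO : (1 - A * Adag) * Adagᴴ = 0 := by
      rw [Matrix.sub_mul, Matrix.one_mul, Matrix.mul_assoc, mp_r8 A Adag hAmp, sub_self]
    rw [assoc12, Matrix.trace_mul_comm, Matrix.mul_neg, ← Matrix.mul_assoc, aO]
    simp
  -- Pythagoras for the decomposition
  have P2 : frobSq (T2 + T3) = frobSq T2 + frobSq T3 := by
    apply pyth; rw [z23, Matrix.trace_zero]
  have P1 : frobSq (Bdag - Adag) = frobSq T1 + (frobSq T2 + frobSq T3) := by
    rw [decomp, pyth T1 (T2 + T3), P2]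
    rw [Matrix.mul_add, Matrix.trace_add, tr12, z13, Matrix.trace_zero, add_zero]
  -- Pythagoras for E against the projection A Adag
  have PA : frobSq (B - A)
      = frobSq (A * Adag * (B - A)) + frobSq ((1 - A * Adag) * (B - A)) := by
    have hsum : A * Adag * (B - A) + (1 - A * Adag) * (B - A) = B - A := by
      rw [← Matrix.add_mul]; simp
    have hz : (A * Adag * (B - A))ᴴ * ((1 - A * Adag) * (B - A)) = 0 := by
      simp only [Matrix.conjTranspose_mul, Matrix.conjTranspose_sub, hA3,
        Matrix.mul_sub, Matrix.sub_mul, Matrix.mul_one, Matrix.one_mul, Matrix.mul_assoc,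
        mp_r1 A Adag hAmp, mp_r2 A Adag hAmp, mp_r3 A Adag hAmp,
      mp_r6 A Adag hAmp, mp_r7 A Adag hAmp, mp_r8 A Adag hAmp, mp_r9 A Adag hAmp,
      mp_r10 A Adag hAmp,
      mp_a1 A Adag hAmp, mp_a2 A Adag hAmp, mp_a3 A Adag hAmp, mp_a6 A Adag hAmp,
      mp_a7 A Adag hAmp, mp_a8 A Adag hAmp, mp_a9 A Adag hAmp, mp_a10 A Adag hAmp,
      mp_r1 B Bdag hBmp, mp_r2 B Bdag hBmp, mp_r3 B Bdag hBmp,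
      mp_r6 B Bdag hBmp, mp_r7 B Bdag hBmp, mp_r8 B Bdag hBmp, mp_r9 B Bdag hBmp,
      mp_r10 B Bdag hBmp,
      mp_a1 B Bdag hBmp, mp_a2 B Bdag hBmp, mp_a3 B Bdag hBmp, mp_a6 B Bdag hBmp,
      mp_a7 B Bdag hBmp, mp_a8 B Bdag hBmp, mp_a9 B Bdag hBmp, mp_a10 B Bdag hBmp]
      abel
    conv_lhs => rw [← hsum]
    exact pyth _ _ (by rw [hz, Matrix.trace_zero])
  -- Pythagoras for E against the projection Bdag B (needs cyclicity)
  have PB : frobSq (B - A)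
      = frobSq ((B - A) * (Bdag * B)) + frobSq ((B - A) * (1 - Bdag * B)) := by
    have hsum : (B - A) * (Bdag * B) + (B - A) * (1 - Bdag * B) = B - A := by
      rw [← Matrix.mul_add]; simp
    have e : ((B - A) * (Bdag * B))ᴴ * ((B - A) * (1 - Bdag * B))
        = (Bdag * (B * ((B - A)ᴴ * (B - A)))) * (1 - Bdag * B) := by
      simp only [Matrix.conjTranspose_mul, Matrix.mul_assoc, mp_a6 B Bdag hBmp]
    have bO : (1 - Bdag * B) * Bdag = 0 := by
      rw [Matrix.sub_mul, Matrix.one_mul, Matrix.mul_assoc, mp_r2 B Bdag hBmp, sub_self]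
    have htr : Matrix.trace (((B - A) * (Bdag * B))ᴴ * ((B - A) * (1 - Bdag * B))) = 0 := by
      rw [e, Matrix.trace_mul_comm, ← Matrix.mul_assoc, bO]
      simp
    conv_lhs => rw [← hsum]
    exact pyth _ _ htr

  -- lower bound for T2
  have step1 : (1 - Bdag * B) * ((Bᴴ - Aᴴ) * (1 - A * Adag)) = 0 := by
    simp only [Matrix.mul_sub, Matrix.sub_mul, Matrix.mul_one, Matrix.one_mul,
      Matrix.mul_assoc, mp_r1 A Adag hAmp, mp_r2 A Adag hAmp, mp_r3 A Adag hAmp,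
      mp_r6 A Adag hAmp, mp_r7 A Adag hAmp, mp_r8 A Adag hAmp, mp_r9 A Adag hAmp,
      mp_r10 A Adag hAmp,
      mp_a1 A Adag hAmp, mp_a2 A Adag hAmp, mp_a3 A Adag hAmp, mp_a6 A Adag hAmp,
      mp_a7 A Adag hAmp, mp_a8 A Adag hAmp, mp_a9 A Adag hAmp, mp_a10 A Adag hAmp,
      mp_r1 B Bdag hBmp, mp_r2 B Bdag hBmp, mp_r3 B Bdag hBmp,
      mp_r6 B Bdag hBmp, mp_r7 B Bdag hBmp, mp_r8 B Bdag hBmp, mp_r9 B Bdag hBmp,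
      mp_r10 B Bdag hBmp,
      mp_a1 B Bdag hBmp, mp_a2 B Bdag hBmp, mp_a3 B Bdag hBmp, mp_a6 B Bdag hBmp,
      mp_a7 B Bdag hBmp, mp_a8 B Bdag hBmp, mp_a9 B Bdag hBmp, mp_a10 B Bdag hBmp]
    abel
  have step2 : (Bᴴ - Aᴴ) * (1 - A * Adag)
      = Bdag * (B * ((Bᴴ - Aᴴ) * (1 - A * Adag))) := by
    have h := step1
    rw [Matrix.sub_mul, Matrix.one_mul, sub_eq_zero, Matrix.mul_assoc] at h
    exact h
  have hQB : Bᴴ * B * (Bdag * Bdagᴴ) = Bdag * B := by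
    rw [Matrix.mul_assoc, mp_a3 B Bdag hBmp, mp_r6 B Bdag hBmp]
  have step3 : (Bᴴ - Aᴴ) * (1 - A * Adag) = Bᴴ * (B * T2) := by
    rw [hT2def]
    conv_lhs => rw [step2]
    rw [← Matrix.mul_assoc, ← hQB]
    simp only [Matrix.mul_assoc]
  have bound2 : frobSq (B - A) - frobSq (A * Adag * (B - A)) ≤ spec B ^ 4 * frobSq T2 := by
    have hY : frobSq ((1 - A * Adag) * (B - A)) = frobSq ((Bᴴ - Aᴴ) * (1 - A * Adag)) := by
      rw [← frobSq_conjTranspose ((1 - A * Adag) * (B - A))]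
      congr 1
      simp [Matrix.conjTranspose_mul, Matrix.conjTranspose_sub, Matrix.conjTranspose_one, hA3]
    have hle : frobSq ((Bᴴ - Aᴴ) * (1 - A * Adag)) ≤ spec B ^ 4 * frobSq T2 := by
      rw [step3]
      calc frobSq (Bᴴ * (B * T2)) ≤ spec Bᴴ ^ 2 * frobSq (B * T2) := frobSq_mul_le _ _
        _ ≤ spec Bᴴ ^ 2 * (spec B ^ 2 * frobSq T2) := by
            apply mul_le_mul_of_nonneg_left (frobSq_mul_le _ _) (by positivity)
        _ = spec B ^ 4 * frobSq T2 := by rw [spec_conjTranspose]; ring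
    linarith [PA]
  -- lower bound for T3
  have step1' : (1 - A * Adag) * ((B - A) * (1 - Bdag * B)) = 0 := by
    simp only [Matrix.mul_sub, Matrix.sub_mul, Matrix.mul_one, Matrix.one_mul,
      Matrix.mul_assoc, mp_r1 A Adag hAmp, mp_r2 A Adag hAmp, mp_r3 A Adag hAmp,
      mp_r6 A Adag hAmp, mp_r7 A Adag hAmp, mp_r8 A Adag hAmp, mp_r9 A Adag hAmp,
      mp_r10 A Adag hAmp,
      mp_a1 A Adag hAmp, mp_a2 A Adag hAmp, mp_a3 A Adag hAmp, mp_a6 A Adag hAmp,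
      mp_a7 A Adag hAmp, mp_a8 A Adag hAmp, mp_a9 A Adag hAmp, mp_a10 A Adag hAmp,
      mp_r1 B Bdag hBmp, mp_r2 B Bdag hBmp, mp_r3 B Bdag hBmp,
      mp_r6 B Bdag hBmp, mp_r7 B Bdag hBmp, mp_r8 B Bdag hBmp, mp_r9 B Bdag hBmp,
      mp_r10 B Bdag hBmp,
      mp_a1 B Bdag hBmp, mp_a2 B Bdag hBmp, mp_a3 B Bdag hBmp, mp_a6 B Bdag hBmp,
      mp_a7 B Bdag hBmp, mp_a8 B Bdag hBmp, mp_a9 B Bdag hBmp, mp_a10 B Bdag hBmp]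
    abel
  have step2' : (B - A) * (1 - Bdag * B)
      = A * (Adag * ((B - A) * (1 - Bdag * B))) := by
    have h := step1'
    rw [Matrix.sub_mul, Matrix.one_mul, sub_eq_zero, Matrix.mul_assoc] at h
    exact h
  have hT3H : T3ᴴ = Adagᴴ * (Adag * ((B - A) * (1 - Bdag * B))) := by
    rw [hT3def]
    simp [Matrix.conjTranspose_mul, Matrix.conjTranspose_sub, Matrix.conjTranspose_one,
      hB4, Matrix.mul_assoc]
  have step3' : (B - A) * (1 - Bdag * B) = A * (Aᴴ * T3ᴴ) := by
    rw [hT3H, mp_a6 A Adag hAmp, mp_a2 A Adag hAmp]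
    conv_lhs => rw [step2']
  have bound3 : frobSq (B - A) - frobSq ((B - A) * (Bdag * B)) ≤ spec A ^ 4 * frobSq T3 := by
    have hle : frobSq ((B - A) * (1 - Bdag * B)) ≤ spec A ^ 4 * frobSq T3 := by
      rw [step3']
      calc frobSq (A * (Aᴴ * T3ᴴ)) ≤ spec A ^ 2 * frobSq (Aᴴ * T3ᴴ) := frobSq_mul_le _ _
        _ ≤ spec A ^ 2 * (spec Aᴴ ^ 2 * frobSq T3ᴴ) := by
            apply mul_le_mul_of_nonneg_left (frobSq_mul_le _ _) (by positivity)
        _ = spec A ^ 4 * frobSq T3 := by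
            rw [spec_conjTranspose, frobSq_conjTranspose]; ring
    linarith [PB]
  -- final assembly
  have hT1eq : frobSq (Bdag * (B - A) * Adag) = frobSq T1 := by
    rw [hT1def, frobSq_neg, Matrix.mul_assoc]
  have hPA4 : (0:ℝ) < spec A ^ 4 := by have := spec_pos A hA0; positivity
  have hPB4 : (0:ℝ) < spec B ^ 4 := by have := spec_pos B hB0; positivity
  have d3 : (frobSq (B - A) - frobSq ((B - A) * Bdag * B)) / spec A ^ 4 ≤ frobSq T3 := by
    rw [div_le_iff₀ hPA4, Matrix.mul_assoc]
    exact le_of_le_of_eq bound3 (mul_comm _ _)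
  have d2 : (frobSq (B - A) - frobSq (A * Adag * (B - A))) / spec B ^ 4 ≤ frobSq T2 := by
    rw [div_le_iff₀ hPB4]
    exact le_of_le_of_eq bound2 (mul_comm _ _)
  linarith [P1, d2, d3, hT1eq]

theorem stmt8 {m n : ℕ}
    (A B : Matrix (Fin m) (Fin n) ℂ)
    (Adag Bdag : Matrix (Fin n) (Fin m) ℂ)
    (hA : IsMoorePenrose A Adag) (hB : IsMoorePenrose B Bdag)
    (E : Matrix (Fin m) (Fin n) ℂ) (hE : E = B - A)
    (hA0 : A ≠ 0) (hB0 : B ≠ 0)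
    :
    frobSq (Bdag - Adag) ≥
      max
        ((frobSq E - frobSq (E * Bdag * B)) / spec A ^ 4
          + (frobSq E - frobSq (A * Adag * E)) / spec B ^ 4
          + frobSq (Bdag * E * Adag))
        ((frobSq E - frobSq (B * Bdag * E)) / spec A ^ 4
          + (frobSq E - frobSq (E * Adag * A)) / spec B ^ 4
          + frobSq (Adag * E * Bdag)) := by
  subst hE
  rw [ge_iff_le, max_le_iff]
  constructor
  · exact key A B Adag Bdag hA hB hA0 hB0
  · have h := key B A Bdag Adag hB hA hB0 hA0
    rw [← neg_sub B A, ← neg_sub Bdag Adag] at h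
    simp only [Matrix.neg_mul, Matrix.mul_neg, frobSq_neg] at h
    linarith [h]
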